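/- Let p ≥ 2 with p < n for some n > p, set p* = np/(n-p), and let κ > 0. There exists a constant C = C(p, n, κ) > 0 such that for all real numbers a, b, |a+b|^{p*} ≤ |a|^{p*} + p*|a|^{p*-2}ab + (p*(p*-1)/2 + κ)|a|^{p*-2}b² + C|b|^{p*}. -/

import Mathlib

open Real

private lemma hd_rpow (q t : ℝ) (ht : (1:ℝ) + t ≠ 0) :
    HasDerivAt (fun s : ℝ => (1 + s) ^ q) (q * (1 + t) ^ (q - 1)) t := by
  have h1 : HasDerivAt (fun s : ℝ => 1 + s) 1 t := (hasDerivAt_id t).const_add 1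
  have h2 := Real.hasDerivAt_rpow_const (x := 1 + t) (p := q) (Or.inl ht)
  simpa [Function.comp_def] using h2.comp t h1

private lemma near_zero (q Q δ : ℝ) (hq : 2 < q) (hδ : 0 < δ) (hδ2 : δ ≤ 1/2)
    (hQ : ∀ s ∈ Set.Icc (-δ) δ, q * (q - 1) * (1 + s) ^ (q - 2) ≤ 2 * Q) :
    ∀ t ∈ Set.Icc (-δ) δ, (1 + t) ^ q ≤ 1 + q * t + Q * t ^ 2 := by
  set g : ℝ → ℝ := fun s => 1 + q * s + Q * s ^ 2 - (1 + s) ^ q with hgdef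
  set g1 : ℝ → ℝ := fun s => q + 2 * Q * s - q * (1 + s) ^ (q - 1) with hg1def
  have hpos : ∀ s ∈ Set.Icc (-δ) δ, (0:ℝ) < 1 + s := by
    intro s hs
    have := hs.1
    linarith
  have hg : ∀ s ∈ Set.Icc (-δ) δ, HasDerivAt g (g1 s) s := by
    intro s hs
    have hne : (1:ℝ) + s ≠ 0 := (hpos s hs).ne'
    have h1 : HasDerivAt (fun x : ℝ => 1 + q * x + Q * x ^ 2) (q + Q * (2 * s)) s := by
      have := (((hasDerivAt_id s).const_mul q).const_add 1).add
        ((hasDerivAt_pow 2 s).const_mul Q)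
      simpa [Pi.add_def] using this
    have := h1.sub (hd_rpow q s hne)
    refine this.congr_deriv ?_
    ring
  have hg1 : ∀ s ∈ Set.Icc (-δ) δ,
      HasDerivAt g1 (2 * Q - q * ((q - 1) * (1 + s) ^ (q - 2))) s := by
    intro s hs
    have hne : (1:ℝ) + s ≠ 0 := (hpos s hs).ne'
    have h1 : HasDerivAt (fun x : ℝ => q + 2 * Q * x) (2 * Q) s := by
      simpa using ((hasDerivAt_id s).const_mul (2 * Q)).const_add q
    have h2 := (hd_rpow (q - 1) s hne).const_mul q
    have := h1.sub h2
    have he : q - 1 - 1 = q - 2 := by ring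
    rw [he] at this
    exact this
  have hg1mono : MonotoneOn g1 (Set.Icc (-δ) δ) := by
    apply monotoneOn_of_deriv_nonneg (convex_Icc _ _)
    · exact fun s hs => (hg1 s hs).continuousAt.continuousWithinAt
    · intro x hx
      rw [interior_Icc] at hx
      exact ((hg1 x (Set.mem_Icc_of_Ioo hx)).differentiableAt).differentiableWithinAt
    · intro x hx
      rw [interior_Icc] at hx
      have hx' := Set.mem_Icc_of_Ioo hx
      rw [(hg1 x hx').deriv]
      have := hQ x hx'
      linarith [this]
  have hg10 : g1 0 = 0 := by
    simp [hg1def]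
  have h0mem : (0:ℝ) ∈ Set.Icc (-δ) δ := by constructor <;> linarith
  have hg0 : g 0 = 0 := by
    simp [hgdef]
  -- g is monotone on [0, δ]
  have hsub1 : Set.Icc (0:ℝ) δ ⊆ Set.Icc (-δ) δ := by
    intro x hx; exact ⟨by linarith [hx.1], hx.2⟩
  have hsub2 : Set.Icc (-δ) (0:ℝ) ⊆ Set.Icc (-δ) δ := by
    intro x hx; exact ⟨hx.1, by linarith [hx.2]⟩
  have hmono : MonotoneOn g (Set.Icc 0 δ) := by
    apply monotoneOn_of_deriv_nonneg (convex_Icc _ _)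
    · exact fun s hs => (hg s (hsub1 hs)).continuousAt.continuousWithinAt
    · intro x hx
      rw [interior_Icc] at hx
      exact ((hg x (hsub1 (Set.mem_Icc_of_Ioo hx))).differentiableAt).differentiableWithinAt
    · intro x hx
      rw [interior_Icc] at hx
      have hx' := hsub1 (Set.mem_Icc_of_Ioo hx)
      rw [(hg x hx').deriv]
      have := hg1mono h0mem hx' hx.1.le
      linarith [hg10]
  have hanti : AntitoneOn g (Set.Icc (-δ) 0) := by
    apply antitoneOn_of_deriv_nonpos (convex_Icc _ _)
    · exact fun s hs => (hg s (hsub2 hs)).continuousAt.continuousWithinAt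
    · intro x hx
      rw [interior_Icc] at hx
      exact ((hg x (hsub2 (Set.mem_Icc_of_Ioo hx))).differentiableAt).differentiableWithinAt
    · intro x hx
      rw [interior_Icc] at hx
      have hx' := hsub2 (Set.mem_Icc_of_Ioo hx)
      rw [(hg x hx').deriv]
      have := hg1mono hx' h0mem hx.2.le
      linarith [hg10]
  intro t ht
  have hgt : 0 ≤ g t := by
    rcases le_total 0 t with h | h
    · have := hmono (by constructor <;> [rfl; linarith [hδ]] : (0:ℝ) ∈ Set.Icc 0 δ)
        ⟨h, ht.2⟩ h
      linarith [hg0]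
    · have := hanti ⟨ht.1, h⟩ (by constructor <;> [linarith; rfl] : (0:ℝ) ∈ Set.Icc (-δ) 0) h
      linarith [hg0]
  simp only [hgdef] at hgt
  linarith

private lemma one_var (q κ : ℝ) (hq : 2 < q) (hκ : 0 < κ) :
    ∃ C ≥ 1, ∀ t : ℝ,
      |1 + t| ^ q ≤ 1 + q * t + (q * (q - 1) / 2 + κ) * t ^ 2 + C * |t| ^ q := by
  set Q : ℝ := q * (q - 1) / 2 + κ with hQdef
  have hq0 : (0:ℝ) < q := by linarith
  have hQpos : 0 < Q := by
    have : 0 < q * (q - 1) := by nlinarith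
    simp only [hQdef]; linarith
  -- find δ
  have hcont : ContinuousAt (fun s : ℝ => (1 + s) ^ (q - 2)) 0 := by
    have h1 : ContinuousAt (fun s : ℝ => 1 + s) 0 := by fun_prop
    have h2 : ContinuousAt (fun x : ℝ => x ^ (q - 2)) ((fun s : ℝ => 1 + s) 0) := by
      apply Real.continuousAt_rpow_const
      left; norm_num
    exact h2.comp h1
  have hev : ∀ᶠ s in nhds (0:ℝ), q * (q - 1) * (1 + s) ^ (q - 2) < q * (q - 1) + 2 * κ := by
    have hlim : Filter.Tendsto (fun s : ℝ => q * (q - 1) * (1 + s) ^ (q - 2)) (nhds 0)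
        (nhds (q * (q - 1))) := by
      have h' : Filter.Tendsto (fun s : ℝ => (1 + s) ^ (q - 2)) (nhds 0)
          (nhds (((1:ℝ) + 0) ^ (q - 2))) := hcont
      have := h'.const_mul (q * (q - 1))
      simpa using this
    exact hlim.eventually_lt_const (by linarith)
  rw [Metric.eventually_nhds_iff] at hev
  obtain ⟨ε, hε, hevs⟩ := hev
  set δ : ℝ := min (ε / 2) (1 / 2) with hδdef
  have hδpos : 0 < δ := by positivity
  have hδhalf : δ ≤ 1 / 2 := min_le_right _ _
  have hnear : ∀ t ∈ Set.Icc (-δ) δ, (1 + t) ^ q ≤ 1 + q * t + Q * t ^ 2 := by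
    apply near_zero q Q δ hq hδpos hδhalf
    intro s hs
    have hdist : dist s 0 < ε := by
      rw [Real.dist_eq, sub_zero]
      have h1 : |s| ≤ δ := abs_le.mpr ⟨hs.1, hs.2⟩
      have h2 : δ ≤ ε / 2 := min_le_left _ _
      linarith
    have := hevs hdist
    simp only [hQdef]
    linarith
  -- far region constant
  set C1 : ℝ := (3:ℝ) ^ q + q * 2 ^ (q - 1) with hC1def
  have hC1pos : 0 < C1 := by
    have : (0:ℝ) < (3:ℝ) ^ q := Real.rpow_pos_of_pos (by norm_num) q
    have : (0:ℝ) < (2:ℝ) ^ (q - 1) := Real.rpow_pos_of_pos (by norm_num) (q - 1)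
    positivity
  have hfar : ∀ t : ℝ, 1 / 2 ≤ |t| →
      |1 + t| ^ q ≤ 1 + q * t + Q * t ^ 2 + C1 * |t| ^ q := by
    intro t ht
    have habs : |1 + t| ≤ 3 * |t| := by
      calc |1 + t| ≤ |(1:ℝ)| + |t| := abs_add_le 1 t
        _ = 1 + |t| := by rw [abs_one]
        _ ≤ 3 * |t| := by linarith
    have h1 : |1 + t| ^ q ≤ (3 * |t|) ^ q :=
      Real.rpow_le_rpow (abs_nonneg _) habs hq0.le
    have h2 : (3 * |t|) ^ q = 3 ^ q * |t| ^ q :=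
      Real.mul_rpow (by norm_num) (abs_nonneg _)
    have htpos : (0:ℝ) < |t| := by linarith
    have h3 : |t| ≤ 2 ^ (q - 1) * |t| ^ q := by
      have e1 : |t| ^ q = |t| ^ (q - 1) * |t| := by
        rw [← Real.rpow_add_one htpos.ne' (q - 1)]
        ring_nf
      have h4 : (1:ℝ) ≤ (2 * |t|) ^ (q - 1) := by
        have := Real.rpow_le_rpow (by norm_num : (0:ℝ) ≤ 1) (by linarith : (1:ℝ) ≤ 2 * |t|)
          (by linarith : (0:ℝ) ≤ q - 1)
        simpa using this
      have h5 : (2 * |t|) ^ (q - 1) = 2 ^ (q - 1) * |t| ^ (q - 1) :=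
        Real.mul_rpow (by norm_num) (abs_nonneg _)
      rw [e1, ← mul_assoc]
      calc |t| = 1 * |t| := (one_mul _).symm
        _ ≤ (2 * |t|) ^ (q - 1) * |t| := by
            apply mul_le_mul_of_nonneg_right h4 (abs_nonneg _)
        _ = 2 ^ (q - 1) * |t| ^ (q - 1) * |t| := by rw [h5]
    have h6 : -t ≤ |t| := neg_le_abs t
    have h7 : 0 ≤ Q * t ^ 2 := by positivity
    have h8 : q * (-t) ≤ q * (2 ^ (q - 1) * |t| ^ q) := by
      apply mul_le_mul_of_nonneg_left _ hq0.le
      linarith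
    simp only [hC1def]
    nlinarith [h1, h2]
  -- middle region
  set K : Set ℝ := (abs ⁻¹' Set.Ici δ) ∩ Set.Icc (-(1:ℝ)) 1 with hKdef
  have hKcompact : IsCompact K := by
    apply IsCompact.inter_left isCompact_Icc
    exact IsClosed.preimage continuous_abs isClosed_Ici
  have hKne : K.Nonempty := by
    refine ⟨δ, ?_, ?_⟩
    · simp [abs_of_pos hδpos]
    · constructor <;> [linarith; linarith]
  set h : ℝ → ℝ := fun t => |1 + t| ^ q - (1 + q * t + Q * t ^ 2) with hhdef
  have hhcont : Continuous h := by
    apply Continuous.sub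
    · rw [continuous_iff_continuousAt]
      intro x
      exact (Real.continuousAt_rpow_const _ _ (Or.inr hq0.le)).comp
        ((continuous_abs.comp (continuous_const.add continuous_id)).continuousAt)
    · fun_prop
  obtain ⟨t₀, ht₀K, ht₀'⟩ := hKcompact.exists_isMaxOn hKne hhcont.continuousOn
  have ht₀ : ∀ t ∈ K, h t ≤ h t₀ := fun t htK => isMaxOn_iff.mp ht₀' t htK
  set C2 : ℝ := max (h t₀) 0 / δ ^ q with hC2def
  have hδq : (0:ℝ) < δ ^ q := Real.rpow_pos_of_pos hδpos q
  have hC2nonneg : 0 ≤ C2 := by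
    apply div_nonneg (le_max_right _ _) hδq.le
  have hmid : ∀ t : ℝ, δ ≤ |t| → |t| ≤ 1 →
      |1 + t| ^ q ≤ 1 + q * t + Q * t ^ 2 + C2 * |t| ^ q := by
    intro t h1 h2
    have htK : t ∈ K := by
      refine ⟨h1, abs_le.mp h2⟩
    have hle : h t ≤ max (h t₀) 0 := le_trans (ht₀ t htK) (le_max_left _ _)
    have h3 : δ ^ q ≤ |t| ^ q := Real.rpow_le_rpow hδpos.le h1 hq0.le
    have h4 : max (h t₀) 0 = C2 * δ ^ q := by
      rw [hC2def, div_mul_cancel₀ _ hδq.ne']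
    have h5 : C2 * δ ^ q ≤ C2 * |t| ^ q := mul_le_mul_of_nonneg_left h3 hC2nonneg
    have := hle
    simp only [hhdef] at this
    linarith
  -- combine
  refine ⟨1 + C1 + C2, by linarith, ?_⟩
  intro t
  rcases le_or_gt (1/2) |t| with hcase | hcase
  · have := hfar t hcase
    have h0 : 0 ≤ |t| ^ q := Real.rpow_nonneg (abs_nonneg _) q
    nlinarith
  · rcases le_or_gt |t| δ with hcase2 | hcase2
    · have ht : t ∈ Set.Icc (-δ) δ := abs_le.mp hcase2
      have := hnear t ht
      have habs : |1 + t| = 1 + t := by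
        rw [abs_of_pos]
        have := abs_le.mp hcase2
        have := this.1
        have : -(1/2 : ℝ) ≤ t := by linarith
        linarith
      rw [habs]
      have h0 : 0 ≤ |t| ^ q := Real.rpow_nonneg (abs_nonneg _) q
      nlinarith
    · have := hmid t hcase2.le (by linarith)
      have h0 : 0 ≤ |t| ^ q := Real.rpow_nonneg (abs_nonneg _) q
      nlinarith

theorem stmt1 (n : ℕ) (p κ : ℝ) (hp : 2 ≤ p) (hpn : p < n) (hκ : 0 < κ)
    (q : ℝ) (hq : q = n * p / (n - p)) :
    ∃ C > 0, ∀ a b : ℝ,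
      |a + b| ^ q ≤ |a| ^ q + q * |a| ^ (q - 2) * a * b
        + (q * (q - 1) / 2 + κ) * |a| ^ (q - 2) * b ^ (2 : ℕ)
        + C * |b| ^ q := by
  have hnp : (0:ℝ) < (n:ℝ) - p := by linarith
  have hq2 : 2 < q := by
    rw [hq, lt_div_iff₀ hnp]
    nlinarith
  obtain ⟨C, hC1, hC⟩ := one_var q κ hq2 hκ
  refine ⟨C, by linarith, ?_⟩
  intro a b
  rcases eq_or_ne a 0 with rfl | ha
  · have h1 : |(0:ℝ)| ^ q = 0 := by
      simp [Real.zero_rpow (by linarith : q ≠ 0)]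
    have h2 : |(0:ℝ)| ^ (q - 2) = 0 := by
      simp [Real.zero_rpow (by intro h; linarith [h] : q - 2 ≠ 0)]
    rw [zero_add, h1, h2]
    ring_nf
    have h3 : |b| ^ q ≤ C * |b| ^ q := by
      have h0 : 0 ≤ |b| ^ q := Real.rpow_nonneg (abs_nonneg _) q
      nlinarith
    linarith [h3]
  · set t : ℝ := b / a with htdef
    have hb : b = a * t := by rw [htdef]; field_simp
    have hapos : 0 < |a| := abs_pos.mpr ha
    have e1 : |a + b| ^ q = |a| ^ q * |1 + t| ^ q := by
      have : a + b = a * (1 + t) := by rw [hb]; ring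
      rw [this, abs_mul, Real.mul_rpow (abs_nonneg _) (abs_nonneg _)]
    have eaq : |a| ^ (q - 2) * a ^ 2 = |a| ^ q := by
      have h1 : (a:ℝ) ^ 2 = |a| ^ (2:ℝ) := by
        rw [Real.rpow_two, sq_abs]
      rw [h1, ← Real.rpow_add hapos]
      norm_num
    have e2 : |a| ^ (q - 2) * a * b = |a| ^ q * t := by
      rw [hb]
      calc |a| ^ (q - 2) * a * (a * t) = |a| ^ (q - 2) * a ^ 2 * t := by ring
        _ = |a| ^ q * t := by rw [eaq]
    have e3 : |a| ^ (q - 2) * b ^ (2:ℕ) = |a| ^ q * t ^ 2 := by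
      rw [hb]
      calc |a| ^ (q - 2) * (a * t) ^ (2:ℕ) = |a| ^ (q - 2) * a ^ 2 * t ^ 2 := by ring
        _ = |a| ^ q * t ^ 2 := by rw [eaq]
    have e4 : |b| ^ q = |a| ^ q * |t| ^ q := by
      rw [hb, abs_mul, Real.mul_rpow (abs_nonneg _) (abs_nonneg _)]
    have e2' : q * |a| ^ (q - 2) * a * b = q * (|a| ^ q * t) := by
      calc q * |a| ^ (q - 2) * a * b = q * (|a| ^ (q - 2) * a * b) := by ring
        _ = q * (|a| ^ q * t) := by rw [e2]
    have e3' : (q * (q - 1) / 2 + κ) * |a| ^ (q - 2) * b ^ (2:ℕ)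
        = (q * (q - 1) / 2 + κ) * (|a| ^ q * t ^ 2) := by
      calc (q * (q - 1) / 2 + κ) * |a| ^ (q - 2) * b ^ (2:ℕ)
          = (q * (q - 1) / 2 + κ) * (|a| ^ (q - 2) * b ^ (2:ℕ)) := by ring
        _ = (q * (q - 1) / 2 + κ) * (|a| ^ q * t ^ 2) := by rw [e3]
    have key := hC t
    have haq : 0 ≤ |a| ^ q := Real.rpow_nonneg (abs_nonneg _) q
    have hmain := mul_le_mul_of_nonneg_left key haq
    rw [e1, e2', e3', e4]
    calc |a| ^ q * |1 + t| ^ q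
        ≤ |a| ^ q * (1 + q * t + (q * (q - 1) / 2 + κ) * t ^ 2 + C * |t| ^ q) := hmain
      _ = |a| ^ q + q * (|a| ^ q * t) + (q * (q - 1) / 2 + κ) * (|a| ^ q * t ^ 2)
          + C * (|a| ^ q * |t| ^ q) := by ring
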